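/- The map sending a maximal chain (id, w_1, …, w_{n−1}) of NC(S_n) to the flag F(w_1) ⊂ F(w_2) ⊂ ⋯ ⊂ F(w_{n−1}) = 𝔽₂^{n−1} is well defined (dim F(w_i) = i for all i, so this is a complete flag of subspaces of 𝔽₂^{n−1}) and injective; moreover, whenever two maximal chains differ in exactly one entry, their image flags differ in exactly one subspace. Consequently the Hurwitz graph H(S_n) is isomorphic to a subgraph of the graph whose vertices are the complete flags of 𝔽₂^{n−1} and whose edges join two flags that differ in exactly one subspace. -/

import Mathlib

namespace NCPaper

variable {G : Type*} [Group G]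

/-- `lenT T w` is the least `k` such that `w` is a product of `k` elements of `T`
(the reflection length with respect to `T`). -/
noncomputable def lenT (T : Set G) (w : G) : ℕ :=
  sInf {k | ∃ l : List G, (∀ t ∈ l, t ∈ T) ∧ l.length = k ∧ l.prod = w}

/-- The absolute order with respect to the generating set `T`. -/
def absLe (T : Set G) (v w : G) : Prop :=
  lenT T w = lenT T v + lenT T (v⁻¹ * w)

/-- Strict absolute order. -/
def absLt (T : Set G) (v w : G) : Prop := absLe T v w ∧ v ≠ w

/-- The noncrossing partition lattice `NC(W, c)`: the interval `[1, c]` in absolute order. -/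
def NC (T : Set G) (c : G) : Set G := {w | absLe T w c}

/-- A maximal chain `(w_0, …, w_k)` in `NC(W, c)`. -/
def IsNCMaxChain (T : Set G) (c : G) {k : ℕ} (w : Fin (k+1) → G) : Prop :=
  w 0 = 1 ∧ w (Fin.last k) = c ∧ (∀ i, w i ∈ NC T c) ∧
  (∀ i : Fin (k+1), lenT T (w i) = i.val) ∧
  ∀ i : Fin k, absLt T (w i.castSucc) (w i.succ)

/-- The Hurwitz graph: vertices are the maximal chains of `NC(W,c)`, and two chains are
adjacent iff they differ in exactly one entry. -/
def hurwitzGraph (T : Set G) (c : G) (k : ℕ) :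
    SimpleGraph {w : Fin (k+1) → G // IsNCMaxChain T c w} where
  Adj a b := ∃! i, a.1 i ≠ b.1 i
  symm := by
    refine ⟨?_⟩
    rintro a b ⟨i, hi, hu⟩
    exact ⟨i, hi.symm, fun j hj => hu j hj.symm⟩
  loopless := by refine ⟨?_⟩; rintro a ⟨i, hi, _⟩; exact hi rfl

/-- The set of transpositions (reflections) of the symmetric group `S_n`. -/
def ST (n : ℕ) : Set (Equiv.Perm (Fin n)) := {t | t.IsSwap}

end NCPaper
namespace NCPaper

/-- The image of the `i`-th vertex of the `n`-gon in `𝔽₂^{n-1}`: the basis vector `e_i`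
for `i < n-1`, and `0` for the last vertex. -/
def vvec (n : ℕ) (i : Fin n) : Fin (n-1) → ZMod 2 :=
  if h : i.val < n - 1 then Pi.single (⟨i.val, h⟩ : Fin (n-1)) 1 else 0

/-- `lineOfA n t L` says that `t` is the transposition `(i,j)` and `L` is the line
`f'(t)`, i.e. `span {e_i + e_j}` for `j < n` resp. `span {e_i}` for `j = n`. -/
def lineOfA (n : ℕ) (t : Equiv.Perm (Fin n))
    (L : Submodule (ZMod 2) (Fin (n-1) → ZMod 2)) : Prop :=
  ∃ i j : Fin n, i ≠ j ∧ t = Equiv.swap i j ∧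
    L = Submodule.span (ZMod 2) {vvec n i + vvec n j}

/-- `FA n w` is the subspace of `𝔽₂^{n-1}` spanned by the union of the lines `f'(t)`
over all transpositions `t ≤ w` in absolute order. -/
def FA (n : ℕ) (w : Equiv.Perm (Fin n)) : Submodule (ZMod 2) (Fin (n-1) → ZMod 2) :=
  sSup {L | ∃ t, lineOfA n t L ∧ absLe (ST n) t w}

/-- A complete flag `V_1 ⊂ V_2 ⊂ ⋯ ⊂ V_{n-1}` of subspaces of `𝔽₂^{n-1}`,
recorded as the function sending `i : Fin (n-1)` to the subspace of dimension `i+1`. -/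
def IsCompleteFlag (n : ℕ) (fl : Fin (n-1) → Submodule (ZMod 2) (Fin (n-1) → ZMod 2)) :
    Prop :=
  (∀ i : Fin (n-1), Module.finrank (ZMod 2) (fl i) = i.val + 1) ∧
  (∀ i j : Fin (n-1), i ≤ j → fl i ≤ fl j)

/-- The graph on complete flags of `𝔽₂^{n-1}`, two flags being adjacent iff they differ
in exactly one subspace. -/
def flagGraph (n : ℕ) :
    SimpleGraph {fl : Fin (n-1) → Submodule (ZMod 2) (Fin (n-1) → ZMod 2) //
                 IsCompleteFlag n fl} where
  Adj a b := ∃! i, a.1 i ≠ b.1 i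
  symm := by
    refine ⟨?_⟩
    rintro a b ⟨i, hi, hu⟩
    exact ⟨i, hi.symm, fun j hj => hu j hj.symm⟩
  loopless := by refine ⟨?_⟩; rintro a ⟨i, hi, _⟩; exact hi rfl

/-- The flag associated to a maximal chain `(1, w_1, …, w_{n-1})` of `NC(S_n)`:
the chain of subspaces `F(w_1) ⊂ ⋯ ⊂ F(w_{n-1})`. -/
def flagOfChain (n : ℕ) (w : Fin (n-1+1) → Equiv.Perm (Fin n)) :
    Fin (n-1) → Submodule (ZMod 2) (Fin (n-1) → ZMod 2) :=
  fun i => FA n (w i.succ)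

section LenT
variable {G : Type*} [Group G]

def lenSet (T : Set G) (w : G) : Set ℕ :=
  {k | ∃ l : List G, (∀ t ∈ l, t ∈ T) ∧ l.length = k ∧ l.prod = w}

lemma lenT_le {T : Set G} {w : G} {k : ℕ} (h : k ∈ lenSet T w) : lenT T w ≤ k :=
  Nat.sInf_le h

lemma zero_mem_lenSet_one (T : Set G) : 0 ∈ lenSet T (1 : G) :=
  ⟨[], by simp, by simp, by simp⟩

lemma lenT_one (T : Set G) : lenT T (1 : G) = 0 :=
  Nat.le_zero.mp (lenT_le (zero_mem_lenSet_one T))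

lemma lenSet_mul {T : Set G} {u v : G} {k m : ℕ}
    (hu : k ∈ lenSet T u) (hv : m ∈ lenSet T v) : k + m ∈ lenSet T (u * v) := by
  obtain ⟨l1, h1, hl1, hp1⟩ := hu
  obtain ⟨l2, h2, hl2, hp2⟩ := hv
  refine ⟨l1 ++ l2, ?_, by simp [hl1, hl2], by simp [hp1, hp2]⟩
  intro t ht
  rcases List.mem_append.mp ht with h | h
  · exact h1 t h
  · exact h2 t h

lemma lenSet_nonempty_of_mem {T : Set G} {w : G} {k : ℕ} (h : k ∈ lenSet T w) :
    (lenSet T w).Nonempty := ⟨k, h⟩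

lemma exists_list_of_lenT {T : Set G} {w : G} (h : (lenSet T w).Nonempty) :
    lenT T w ∈ lenSet T w := Nat.sInf_mem h

end LenT
section MspSec
open Equiv Submodule Module

variable (n : ℕ)

lemma vvec_apply (p : Fin n) (i : Fin (n-1)) :
    vvec n p i = if (p : ℕ) = (i : ℕ) then 1 else 0 := by
  unfold vvec
  split
  · rename_i h
    rw [Pi.single_apply]
    simp [Fin.ext_iff, eq_comm]
  · rename_i h
    have : ¬ ((p : ℕ) = (i : ℕ)) := by
      intro he; exact h (he ▸ i.isLt)
    simp [this]

/-- helper : in a `ZMod 2` module, `b + b = 0`. -/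
lemma addadd {M : Type*} [AddCommGroup M] [Module (ZMod 2) M] (a b c : M) :
    (a + b) + (b + c) = a + c := by
  have : b + b = 0 := by
    have := two_smul (ZMod 2) b
    rw [show (2 : ZMod 2) = 0 by decide, zero_smul] at this
    exact this.symm
  calc (a + b) + (b + c) = a + (b + b) + c := by abel
  _ = a + c := by rw [this]; abel

def Msp (w : Equiv.Perm (Fin n)) : Submodule (ZMod 2) (Fin (n-1) → ZMod 2) :=
  Submodule.span (ZMod 2) (Set.range fun p => vvec n p + vvec n (w p))

lemma gen_mem_Msp (w : Equiv.Perm (Fin n)) (p : Fin n) :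
    vvec n p + vvec n (w p) ∈ Msp n w :=
  Submodule.subset_span ⟨p, rfl⟩

lemma vpair_mem_Msp_symm (w : Equiv.Perm (Fin n)) (p q : Fin n)
    (h : vvec n p + vvec n q ∈ Msp n w) : vvec n q + vvec n p ∈ Msp n w := by
  rwa [add_comm]

lemma Msp_le_iff (w : Equiv.Perm (Fin n)) (U : Submodule (ZMod 2) (Fin (n-1) → ZMod 2))
    (h : ∀ p, vvec n p + vvec n (w p) ∈ U) : Msp n w ≤ U := by
  apply Submodule.span_le.mpr
  rintro x ⟨p, rfl⟩
  exact h p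

lemma Msp_one : Msp n (1 : Equiv.Perm (Fin n)) = ⊥ := by
  apply le_antisymm
  · apply Msp_le_iff
    intro p
    have : vvec n p + vvec n p = 0 := by
      have h := addadd (0 : Fin (n-1) → ZMod 2) (vvec n p) 0
      simpa using h
    simp [Equiv.Perm.one_apply, this]
  · exact bot_le

lemma vv_self_add (p : Fin n) : vvec n p + vvec n p = 0 := by
  have h := addadd (0 : Fin (n-1) → ZMod 2) (vvec n p) (0 : Fin (n-1) → ZMod 2)
  simpa using h

lemma Msp_mul_le (u v : Equiv.Perm (Fin n)) : Msp n (u * v) ≤ Msp n u ⊔ Msp n v := by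
  apply Msp_le_iff
  intro p
  have : vvec n p + vvec n ((u * v) p) =
      (vvec n p + vvec n (v p)) + (vvec n (v p) + vvec n (u (v p))) := by
    rw [addadd]; rfl
  rw [this]
  exact add_mem (Submodule.mem_sup_right (gen_mem_Msp n v p))
    (Submodule.mem_sup_left (gen_mem_Msp n u (v p)))

lemma Msp_inv_le (w : Equiv.Perm (Fin n)) : Msp n w⁻¹ ≤ Msp n w := by
  apply Msp_le_iff
  intro p
  have h := gen_mem_Msp n w (w⁻¹ p)
  rw [show w (w⁻¹ p) = p from w.apply_symm_apply p] at h
  rwa [add_comm]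

lemma Msp_inv (w : Equiv.Perm (Fin n)) : Msp n w⁻¹ = Msp n w := by
  refine le_antisymm (Msp_inv_le n w) ?_
  have := Msp_inv_le n w⁻¹
  rwa [inv_inv] at this

lemma Msp_swap_mul_le (a b : Fin n) (w : Equiv.Perm (Fin n)) :
    Msp n (Equiv.swap a b * w) ≤
      Submodule.span (ZMod 2) {vvec n a + vvec n b} ⊔ Msp n w := by
  apply Msp_le_iff
  intro p
  have happ : (Equiv.swap a b * w) p = Equiv.swap a b (w p) := rfl
  rw [happ, Equiv.swap_apply_def]
  split
  · rename_i h
    -- w p = a, target vvec p + vvec b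
    have : vvec n p + vvec n b = (vvec n p + vvec n (w p)) + (vvec n a + vvec n b) := by
      rw [h, addadd]
    rw [this]
    exact add_mem (Submodule.mem_sup_right (gen_mem_Msp n w p))
      (Submodule.mem_sup_left (Submodule.subset_span rfl))
  · split
    · rename_i h1 h
      have : vvec n p + vvec n a = (vvec n p + vvec n (w p)) + (vvec n b + vvec n a) := by
        rw [h, addadd]
      rw [this, add_comm (vvec n b) (vvec n a)]
      exact add_mem (Submodule.mem_sup_right (gen_mem_Msp n w p))
        (Submodule.mem_sup_left (Submodule.subset_span rfl))
    · exact Submodule.mem_sup_right (gen_mem_Msp n w p)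

lemma finrank_sup_le' (A B : Submodule (ZMod 2) (Fin (n-1) → ZMod 2)) :
    finrank (ZMod 2) ((A ⊔ B : Submodule (ZMod 2) (Fin (n-1) → ZMod 2)) : Type _) ≤
      finrank (ZMod 2) A + finrank (ZMod 2) B := by
  have := Submodule.finrank_sup_add_finrank_inf_eq A B
  omega

lemma finrank_span_singleton_le (x : Fin (n-1) → ZMod 2) :
    finrank (ZMod 2) (Submodule.span (ZMod 2) {x} : Submodule (ZMod 2) (Fin (n-1) → ZMod 2)) ≤ 1 := by
  by_cases hx : x = 0
  · rw [hx, Submodule.span_zero_singleton, finrank_bot]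
    omega
  · rw [finrank_span_singleton hx]

lemma finrank_sup_line_le (A : Submodule (ZMod 2) (Fin (n-1) → ZMod 2))
    (x : Fin (n-1) → ZMod 2) :
    finrank (ZMod 2) ((Submodule.span (ZMod 2) {x} ⊔ A :
      Submodule (ZMod 2) (Fin (n-1) → ZMod 2)) : Type _) ≤ finrank (ZMod 2) A + 1 := by
  have := finrank_sup_le' n (Submodule.span (ZMod 2) {x}) A
  have := finrank_span_singleton_le n x
  omega

lemma finrank_sup_line_of_not_mem (A : Submodule (ZMod 2) (Fin (n-1) → ZMod 2))
    (x : Fin (n-1) → ZMod 2) (hx : x ∉ A) :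
    finrank (ZMod 2) ((A ⊔ Submodule.span (ZMod 2) {x} :
      Submodule (ZMod 2) (Fin (n-1) → ZMod 2)) : Type _) = finrank (ZMod 2) A + 1 := by
  have hlt : A < A ⊔ Submodule.span (ZMod 2) {x} := by
    refine lt_of_le_of_ne le_sup_left ?_
    intro he
    apply hx
    rw [he]
    exact Submodule.mem_sup_right (Submodule.mem_span_singleton_self x)
  have h1 : finrank (ZMod 2) A < finrank (ZMod 2)
      ((A ⊔ Submodule.span (ZMod 2) {x} : Submodule (ZMod 2) (Fin (n-1) → ZMod 2)) : Type _) :=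
    Submodule.finrank_lt_finrank_of_lt hlt
  have h2 := finrank_sup_line_le n A x
  rw [sup_comm] at h2
  omega

end MspSec
section RankLen
open Equiv Submodule Module

variable (n : ℕ)

lemma finrank_Msp_prod_le (l : List (Equiv.Perm (Fin n))) (hl : ∀ t ∈ l, t.IsSwap) :
    finrank (ZMod 2) (Msp n l.prod) ≤ l.length := by
  induction l with
  | nil => rw [List.prod_nil, Msp_one]; simp
  | cons t l ih =>
    obtain ⟨a, b, hab, rfl⟩ := hl t List.mem_cons_self
    have h1 : Msp n ((Equiv.swap a b :: l).prod) ≤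
        Submodule.span (ZMod 2) {vvec n a + vvec n b} ⊔ Msp n l.prod := by
      rw [List.prod_cons]
      exact Msp_swap_mul_le n a b l.prod
    have h2 : finrank (ZMod 2) (Msp n ((Equiv.swap a b :: l).prod)) ≤
        finrank (ZMod 2) ((Submodule.span (ZMod 2) {vvec n a + vvec n b} ⊔ Msp n l.prod :
          Submodule (ZMod 2) (Fin (n-1) → ZMod 2)) : Type _) :=
      Submodule.finrank_mono h1
    have h3 := finrank_sup_line_le n (Msp n l.prod) (vvec n a + vvec n b)
    have h4 := ih (fun t ht => hl t (List.mem_cons_of_mem _ ht))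
    simp only [List.length_cons]
    omega

lemma exists_nonfixed_small {w : Equiv.Perm (Fin n)} (hw : w ≠ 1) :
    ∃ i : Fin n, w i ≠ i ∧ (i : ℕ) < n - 1 := by
  have : ∃ j, w j ≠ j := by
    by_contra h
    push_neg at h
    exact hw (Equiv.ext h)
  obtain ⟨j, hj⟩ := this
  by_cases h : (j : ℕ) < n - 1
  · exact ⟨j, hj, h⟩
  · refine ⟨w j, fun he => hj (w.injective he), ?_⟩
    by_contra h2
    apply hj
    apply Fin.ext
    have hj1 : (j : ℕ) = n - 1 := by omega
    have hj2 : ((w j) : ℕ) = n - 1 := by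
      have := (w j).isLt
      omega
    rw [hj1, hj2]

lemma coord_zero_of_fixed {w : Equiv.Perm (Fin n)} {i : Fin n} (hfix : w i = i)
    (hi : (i : ℕ) < n - 1) : ∀ x ∈ Msp n w, x ⟨(i : ℕ), hi⟩ = 0 := by
  intro x hx
  set i' : Fin (n-1) := ⟨(i : ℕ), hi⟩ with hi'
  have : Msp n w ≤ LinearMap.ker (LinearMap.proj i' :
      (Fin (n-1) → ZMod 2) →ₗ[ZMod 2] ZMod 2) := by
    apply Msp_le_iff
    intro p
    simp only [LinearMap.mem_ker, LinearMap.proj_apply, Pi.add_apply]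
    rw [vvec_apply, vvec_apply]
    have hiff : w p = i ↔ p = i := by
      constructor
      · intro h; have := w.injective (h.trans hfix.symm); exact this
      · intro h; rw [h, hfix]
    have hc : ((p : ℕ) = (i' : ℕ)) ↔ ((w p : ℕ) = (i' : ℕ)) := by
      simp only [hi']
      constructor
      · intro h
        have : p = i := Fin.ext h
        rw [this, hfix]
      · intro h
        have : w p = i := Fin.ext h
        exact congrArg _ (hiff.mp this)
    by_cases hp : (p : ℕ) = (i' : ℕ)
    · rw [if_pos hp, if_pos (hc.mp hp)]
      decide
    · rw [if_neg hp, if_neg (fun h => hp (hc.mpr h))]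
      decide
  exact this hx

lemma vpair_not_mem {w' : Equiv.Perm (Fin n)} {i : Fin n} (hfix : w' i = i)
    (hi : (i : ℕ) < n - 1) {q : Fin n} (hq : q ≠ i) :
    vvec n i + vvec n q ∉ Msp n w' := by
  intro hmem
  have := coord_zero_of_fixed n hfix hi _ hmem
  rw [Pi.add_apply, vvec_apply, vvec_apply] at this
  have h1 : ((i : ℕ) = ((⟨(i : ℕ), hi⟩ : Fin (n-1)) : ℕ)) := rfl
  rw [if_pos h1] at this
  have h2 : ¬ ((q : ℕ) = ((⟨(i : ℕ), hi⟩ : Fin (n-1)) : ℕ)) := by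
    intro h
    exact hq (Fin.ext h)
  rw [if_neg h2] at this
  simp at this

lemma exists_swap_list (w : Equiv.Perm (Fin n)) :
    ∃ l : List (Equiv.Perm (Fin n)), (∀ t ∈ l, t.IsSwap) ∧
      l.length = finrank (ZMod 2) (Msp n w) ∧ l.prod = w := by
  generalize hk : finrank (ZMod 2) (Msp n w) = k
  induction k using Nat.strong_induction_on generalizing w with
  | _ k ih =>
  by_cases hw : w = 1
  · refine ⟨[], by simp, ?_, by simp [hw]⟩
    rw [hw, Msp_one, finrank_bot] at hk
    simpa using hk
  · obtain ⟨i, hne, hi⟩ := exists_nonfixed_small n hw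
    set t := Equiv.swap i (w i) with ht
    set w' := t * w with hw'
    have hfix : w' i = i := by
      rw [hw', ht]
      simp [Equiv.Perm.mul_apply, Equiv.swap_apply_right]
    have hx_mem : vvec n i + vvec n (w i) ∈ Msp n w := gen_mem_Msp n w i
    have hx_not : vvec n i + vvec n (w i) ∉ Msp n w' :=
      vpair_not_mem n hfix hi (fun h => hne h)
    have hle1 : Msp n w ≤ Submodule.span (ZMod 2) {vvec n i + vvec n (w i)} ⊔ Msp n w' := by
      have : w = t * w' := by rw [hw', ht, ← mul_assoc, Equiv.swap_mul_self, one_mul]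
      calc Msp n w = Msp n (t * w') := by rw [← this]
      _ ≤ _ := by rw [ht]; exact Msp_swap_mul_le n i (w i) w'
    have hle2 : Msp n w' ≤ Msp n w := by
      have h := Msp_swap_mul_le n i (w i) w
      rw [← ht, ← hw'] at h
      have hspan : Submodule.span (ZMod 2) {vvec n i + vvec n (w i)} ≤ Msp n w :=
        (Submodule.span_singleton_le_iff_mem _ _).mpr hx_mem
      exact h.trans (sup_le hspan le_rfl)
    have heq : Msp n w = Msp n w' ⊔ Submodule.span (ZMod 2) {vvec n i + vvec n (w i)} := by
      apply le_antisymm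
      · rw [sup_comm]
        exact hle1
      · exact sup_le hle2 ((Submodule.span_singleton_le_iff_mem _ _).mpr hx_mem)
    have hrank : finrank (ZMod 2) (Msp n w) = finrank (ZMod 2) (Msp n w') + 1 := by
      rw [heq]
      exact finrank_sup_line_of_not_mem n (Msp n w') _ hx_not
    have hklt : finrank (ZMod 2) (Msp n w') < k := by omega
    obtain ⟨l', hl's, hl'len, hl'prod⟩ := ih _ hklt w' rfl
    refine ⟨t :: l', ?_, ?_, ?_⟩
    · intro s hs
      rcases List.mem_cons.mp hs with h | h
      · rw [h, ht]; exact ⟨i, w i, fun he => hne he.symm, rfl⟩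
      · exact hl's s h
    · simp [hl'len]
      omega
    · rw [List.prod_cons, hl'prod, hw', ← mul_assoc, ht, Equiv.swap_mul_self, one_mul]

lemma lenT_eq_finrank (w : Equiv.Perm (Fin n)) :
    lenT (ST n) w = finrank (ZMod 2) (Msp n w) := by
  obtain ⟨l, hls, hlen, hprod⟩ := exists_swap_list n w
  have hmem : finrank (ZMod 2) (Msp n w) ∈ lenSet (ST n) w := ⟨l, hls, hlen, hprod⟩
  apply le_antisymm
  · exact lenT_le hmem
  · apply le_csInf ⟨_, hmem⟩
    rintro k ⟨l', hl's, hl'len, hl'prod⟩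
    rw [← hl'prod, ← hl'len]
    exact finrank_Msp_prod_le n l' hl's

end RankLen
section ClaimsFG
open Equiv Submodule Module

variable (n : ℕ)

lemma vpair_ne_zero {a b : Fin n} (hab : a ≠ b) : vvec n a + vvec n b ≠ 0 := by
  have hone : ∃ c d : Fin n, (c = a ∧ d = b ∨ c = b ∧ d = a) ∧ (c : ℕ) < n - 1 := by
    by_cases h : (a : ℕ) < n - 1
    · exact ⟨a, b, Or.inl ⟨rfl, rfl⟩, h⟩
    · refine ⟨b, a, Or.inr ⟨rfl, rfl⟩, ?_⟩
      have ha := a.isLt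
      have hb := b.isLt
      have : (a : ℕ) ≠ (b : ℕ) := fun he => hab (Fin.ext he)
      omega
  obtain ⟨c, d, hcd, hc⟩ := hone
  intro h0
  have hcd' : c ≠ d := by
    rcases hcd with ⟨rfl, rfl⟩ | ⟨rfl, rfl⟩
    · exact hab
    · exact hab.symm
  have hsum : vvec n c + vvec n d = 0 := by
    rcases hcd with ⟨rfl, rfl⟩ | ⟨rfl, rfl⟩
    · exact h0
    · rw [add_comm]; exact h0
  have := congrFun hsum ⟨(c : ℕ), hc⟩
  rw [Pi.add_apply, vvec_apply, vvec_apply] at this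
  have hne : ((d : ℕ)) ≠ (((⟨(c:ℕ), hc⟩ : Fin (n-1))) : ℕ) := by
    intro hh
    exact hcd' (Fin.ext (show (c:ℕ) = (d:ℕ) from hh.symm)).symm.symm
  rw [if_pos rfl, if_neg hne] at this
  simp at this

lemma Msp_swap {a b : Fin n} (hab : a ≠ b) :
    Msp n (Equiv.swap a b) = Submodule.span (ZMod 2) {vvec n a + vvec n b} := by
  apply le_antisymm
  · apply Msp_le_iff
    intro p
    by_cases hpa : p = a
    · rw [hpa, Equiv.swap_apply_left]
      exact Submodule.mem_span_singleton_self _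
    · by_cases hpb : p = b
      · rw [hpb, Equiv.swap_apply_right, add_comm]
        exact Submodule.mem_span_singleton_self _
      · rw [Equiv.swap_apply_of_ne_of_ne hpa hpb, vv_self_add]
        exact Submodule.zero_mem _
  · rw [Submodule.span_singleton_le_iff_mem]
    have := gen_mem_Msp n (Equiv.swap a b) a
    rwa [Equiv.swap_apply_left] at this

lemma finrank_line {a b : Fin n} (hab : a ≠ b) :
    finrank (ZMod 2) (Submodule.span (ZMod 2) {vvec n a + vvec n b} :
      Submodule (ZMod 2) (Fin (n-1) → ZMod 2)) = 1 :=
  finrank_span_singleton (vpair_ne_zero n hab)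

lemma sign_swap_list (l : List (Equiv.Perm (Fin n))) (hl : ∀ t ∈ l, t.IsSwap) :
    Equiv.Perm.sign l.prod = (-1) ^ l.length := by
  induction l with
  | nil => simp
  | cons t l ih =>
    obtain ⟨a, b, hab, rfl⟩ := hl t List.mem_cons_self
    rw [List.prod_cons, map_mul, Equiv.Perm.sign_swap hab,
      ih (fun s hs => hl s (List.mem_cons_of_mem _ hs)), List.length_cons, pow_succ]
    rw [mul_comm]

lemma sign_eq_parity (w : Equiv.Perm (Fin n)) :
    Equiv.Perm.sign w = (-1) ^ (finrank (ZMod 2) (Msp n w)) := by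
  obtain ⟨l, hls, hlen, hprod⟩ := exists_swap_list n w
  rw [← hlen, ← hprod]
  exact sign_swap_list n l hls

lemma rank_ne_of_swap_mul {a b : Fin n} (hab : a ≠ b) (w : Equiv.Perm (Fin n)) :
    finrank (ZMod 2) (Msp n (Equiv.swap a b * w)) ≠ finrank (ZMod 2) (Msp n w) := by
  intro heq
  have h1 := sign_eq_parity n (Equiv.swap a b * w)
  have h2 := sign_eq_parity n w
  rw [heq, ← h2] at h1
  rw [map_mul, Equiv.Perm.sign_swap hab] at h1
  have h4 : (-1 : ℤˣ) * Equiv.Perm.sign w = 1 * Equiv.Perm.sign w := by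
    rw [one_mul]; exact h1
  have h5 := mul_right_cancel h4
  exact absurd h5 (by decide)

lemma phi_eq_zero_on_Msp (w : Equiv.Perm (Fin n)) (S : Finset (Fin n))
    (hcl : ∀ p, p ∈ S ↔ w p ∈ S) (htop : ∀ p ∈ S, (p : ℕ) < n - 1)
    {x : Fin (n-1) → ZMod 2} (hx : x ∈ Msp n w) :
    ∑ p ∈ S.attach, x ⟨(p.1 : ℕ), htop p.1 p.2⟩ = 0 := by
  have key : ∀ q : Fin n,
      (∑ p ∈ S.attach, vvec n q ⟨(p.1 : ℕ), htop p.1 p.2⟩) = if q ∈ S then 1 else 0 := by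
    intro q
    have h1 : ∀ p : {x // x ∈ S}, vvec n q ⟨(p.1 : ℕ), htop p.1 p.2⟩
        = if q = p.1 then 1 else 0 := by
      intro p
      rw [vvec_apply]
      congr 1
      simp [Fin.ext_iff]
    calc ∑ p ∈ S.attach, vvec n q ⟨(p.1 : ℕ), htop p.1 p.2⟩
        = ∑ p ∈ S.attach, (if q = p.1 then 1 else 0) := Finset.sum_congr rfl (fun p _ => h1 p)
      _ = ∑ p ∈ S, (if q = p then 1 else 0) :=
            Finset.sum_attach S (fun p => if q = p then (1 : ZMod 2) else 0)
      _ = if q ∈ S then 1 else 0 := Finset.sum_ite_eq S q (fun _ => 1)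
  induction hx using Submodule.span_induction with
  | mem x hmem =>
    obtain ⟨p, rfl⟩ := hmem
    have : ∑ q ∈ S.attach, (vvec n p + vvec n (w p)) ⟨(q.1 : ℕ), htop q.1 q.2⟩
        = (∑ q ∈ S.attach, vvec n p ⟨(q.1 : ℕ), htop q.1 q.2⟩)
          + (∑ q ∈ S.attach, vvec n (w p) ⟨(q.1 : ℕ), htop q.1 q.2⟩) := by
      simp only [Pi.add_apply, Finset.sum_add_distrib]
    rw [this, key, key]
    by_cases hp : p ∈ S
    · rw [if_pos hp, if_pos ((hcl p).mp hp)]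
      decide
    · rw [if_neg hp, if_neg (fun h => hp ((hcl p).mpr h))]
      decide
  | zero => simp
  | add x y hx hy ihx ihy =>
    have : ∑ q ∈ S.attach, (x + y) ⟨(q.1 : ℕ), htop q.1 q.2⟩
        = (∑ q ∈ S.attach, x ⟨(q.1 : ℕ), htop q.1 q.2⟩)
          + (∑ q ∈ S.attach, y ⟨(q.1 : ℕ), htop q.1 q.2⟩) := by
      simp only [Pi.add_apply, Finset.sum_add_distrib]
    rw [this, ihx, ihy, add_zero]
  | smul c x hx ihx =>
    have : ∑ q ∈ S.attach, (c • x) ⟨(q.1 : ℕ), htop q.1 q.2⟩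
        = c * ∑ q ∈ S.attach, x ⟨(q.1 : ℕ), htop q.1 q.2⟩ := by
      simp only [Pi.smul_apply, smul_eq_mul, Finset.mul_sum]
    rw [this, ihx, mul_zero]

lemma mem_Msp_of_sameCycle {w : Equiv.Perm (Fin n)} {a b : Fin n}
    (h : w.SameCycle a b) : vvec n a + vvec n b ∈ Msp n w := by
  obtain ⟨i, hi0, _, hpow⟩ := Equiv.Perm.SameCycle.exists_pow_eq w h
  have key : ∀ k : ℕ, ∀ c : Fin n, vvec n c + vvec n ((w ^ k) c) ∈ Msp n w := by
    intro k
    induction k with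
    | zero => intro c; simp [vv_self_add n c]
    | succ k ih =>
      intro c
      have hc : (w ^ (k+1)) c = (w ^ k) (w c) := by
        rw [pow_succ]
        rfl
      rw [hc]
      have : vvec n c + vvec n ((w ^ k) (w c)) =
          (vvec n c + vvec n (w c)) + (vvec n (w c) + vvec n ((w ^ k) (w c))) := by
        rw [addadd]
      rw [this]
      exact add_mem (gen_mem_Msp n w c) (ih (w c))
  have := key i a
  rwa [hpow] at this

lemma not_mem_Msp_of_not_sameCycle {w : Equiv.Perm (Fin n)} {a b : Fin n}
    (h : ¬ w.SameCycle a b) : vvec n a + vvec n b ∉ Msp n w := by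
  have hab : a ≠ b := fun he => h (he ▸ Equiv.Perm.SameCycle.refl w a)
  -- choose the orbit not containing the top index
  have hchoice : ∃ c d : Fin n, (vvec n c + vvec n d = vvec n a + vvec n b) ∧
      ¬ w.SameCycle c d ∧ (∀ p, w.SameCycle c p → (p : ℕ) < n - 1) := by
    by_cases htop : ∀ p, w.SameCycle a p → (p : ℕ) < n - 1
    · exact ⟨a, b, rfl, h, htop⟩
    · refine ⟨b, a, add_comm _ _, fun hc => h hc.symm, ?_⟩
      push_neg at htop
      obtain ⟨q, hq, hq2⟩ := htop
      intro p hp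
      by_contra h2
      push_neg at h2
      have hpq : p = q := by
        apply Fin.ext
        have := p.isLt
        have := q.isLt
        omega
      exact h (hq.trans (hpq ▸ hp.symm))
  obtain ⟨c, d, heq, hcd, htop⟩ := hchoice
  rw [← heq]
  intro hmem
  classical
  set S : Finset (Fin n) := Finset.univ.filter (fun p => w.SameCycle c p) with hS
  have hcl : ∀ p, p ∈ S ↔ w p ∈ S := by
    intro p
    simp only [hS, Finset.mem_filter, Finset.mem_univ, true_and]
    exact (Equiv.Perm.sameCycle_apply_right).symm
  have htop' : ∀ p ∈ S, (p : ℕ) < n - 1 := by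
    intro p hp
    simp only [hS, Finset.mem_filter, Finset.mem_univ, true_and] at hp
    exact htop p hp
  have hzero := phi_eq_zero_on_Msp n w S hcl htop' hmem
  -- compute the sum
  have key : ∀ q : Fin n,
      (∑ p ∈ S.attach, vvec n q ⟨(p.1 : ℕ), htop' p.1 p.2⟩) = if q ∈ S then 1 else 0 := by
    intro q
    have h1 : ∀ p : {x // x ∈ S}, vvec n q ⟨(p.1 : ℕ), htop' p.1 p.2⟩
        = if q = p.1 then 1 else 0 := by
      intro p
      rw [vvec_apply]
      congr 1
      simp [Fin.ext_iff]
    calc ∑ p ∈ S.attach, vvec n q ⟨(p.1 : ℕ), htop' p.1 p.2⟩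
        = ∑ p ∈ S.attach, (if q = p.1 then 1 else 0) := Finset.sum_congr rfl (fun p _ => h1 p)
      _ = ∑ p ∈ S, (if q = p then 1 else 0) :=
            Finset.sum_attach S (fun p => if q = p then (1 : ZMod 2) else 0)
      _ = if q ∈ S then 1 else 0 := Finset.sum_ite_eq S q (fun _ => 1)
  have hsum : ∑ p ∈ S.attach, (vvec n c + vvec n d) ⟨(p.1 : ℕ), htop' p.1 p.2⟩
      = (∑ p ∈ S.attach, vvec n c ⟨(p.1 : ℕ), htop' p.1 p.2⟩)
        + (∑ p ∈ S.attach, vvec n d ⟨(p.1 : ℕ), htop' p.1 p.2⟩) := by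
    simp only [Pi.add_apply, Finset.sum_add_distrib]
  rw [hsum, key, key] at hzero
  have hcS : c ∈ S := by
    simp [hS, Equiv.Perm.SameCycle.refl]
  have hdS : d ∉ S := by
    simp only [hS, Finset.mem_filter, Finset.mem_univ, true_and]
    exact hcd
  rw [if_pos hcS, if_neg hdS, add_zero] at hzero
  exact one_ne_zero hzero

lemma mem_Msp_iff_sameCycle {w : Equiv.Perm (Fin n)} {a b : Fin n} :
    vvec n a + vvec n b ∈ Msp n w ↔ (a = b ∨ w.SameCycle a b) := by
  constructor
  · intro h
    by_cases hab : a = b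
    · exact Or.inl hab
    · by_contra h2
      push_neg at h2
      exact not_mem_Msp_of_not_sameCycle n h2.2 h
  · rintro (rfl | h)
    · rw [vv_self_add]; exact Submodule.zero_mem _
    · exact mem_Msp_of_sameCycle n h

end ClaimsFG
section ClaimF
open Equiv Submodule Module

variable (n : ℕ)

lemma lenT_swap {a b : Fin n} (hab : a ≠ b) :
    lenT (ST n) (Equiv.swap a b) = 1 := by
  rw [lenT_eq_finrank, Msp_swap n hab, finrank_line n hab]

lemma swap_mul_swap_mul (a b : Fin n) (w : Equiv.Perm (Fin n)) :
    Equiv.swap a b * (Equiv.swap a b * w) = w := by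
  rw [← mul_assoc, Equiv.swap_mul_self, one_mul]

lemma absLe_swap_iff {a b : Fin n} (hab : a ≠ b) (w : Equiv.Perm (Fin n)) :
    absLe (ST n) (Equiv.swap a b) w ↔
      Submodule.span (ZMod 2) {vvec n a + vvec n b} ≤ Msp n w := by
  set L := Submodule.span (ZMod 2) {vvec n a + vvec n b} with hL
  set t := Equiv.swap a b with ht
  have habs : absLe (ST n) t w ↔
      finrank (ZMod 2) (Msp n w) = 1 + finrank (ZMod 2) (Msp n (t * w)) := by
    unfold absLe
    rw [show t⁻¹ = t from Equiv.swap_inv a b, lenT_swap n hab,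
      lenT_eq_finrank, lenT_eq_finrank]
  have hne : finrank (ZMod 2) (Msp n (t * w)) ≠ finrank (ZMod 2) (Msp n w) := by
    have := rank_ne_of_swap_mul n hab w
    rwa [← ht] at this
  have h1 : Msp n (t * w) ≤ L ⊔ Msp n w := Msp_swap_mul_le n a b w
  have h2 : Msp n w ≤ L ⊔ Msp n (t * w) := by
    have := Msp_swap_mul_le n a b (t * w)
    rwa [← ht, swap_mul_swap_mul] at this
  rw [habs]
  constructor
  · intro heq
    rw [Submodule.span_singleton_le_iff_mem]
    by_contra hx
    by_cases hxtw : vvec n a + vvec n b ∈ Msp n (t * w)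
    · have hsub : Msp n w ≤ Msp n (t * w) :=
        h2.trans (sup_le ((Submodule.span_singleton_le_iff_mem _ _).mpr hxtw) le_rfl)
      have := Submodule.finrank_mono hsub
      omega
    · have e1 : finrank (ZMod 2) ((Msp n (t*w) ⊔ L : Submodule (ZMod 2) (Fin (n-1) → ZMod 2)) : Type _)
          = finrank (ZMod 2) (Msp n (t*w)) + 1 := finrank_sup_line_of_not_mem n _ _ hxtw
      have e2 : finrank (ZMod 2) ((Msp n w ⊔ L : Submodule (ZMod 2) (Fin (n-1) → ZMod 2)) : Type _)
          = finrank (ZMod 2) (Msp n w) + 1 := finrank_sup_line_of_not_mem n _ _ hx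
      have e3 : Msp n w ⊔ L = Msp n (t*w) ⊔ L := by
        apply le_antisymm
        · exact sup_le (h2.trans (by rw [sup_comm])) le_sup_right
        · exact sup_le (h1.trans (by rw [sup_comm])) le_sup_right
      rw [e3, e1] at e2
      omega
  · intro hle
    have hsub : Msp n (t * w) ≤ Msp n w := h1.trans (sup_le hle le_rfl)
    have hmono := Submodule.finrank_mono hsub
    have hup : finrank (ZMod 2) (Msp n w) ≤ finrank (ZMod 2) (Msp n (t*w)) + 1 := by
      have h3 := finrank_sup_line_le n (Msp n (t*w)) (vvec n a + vvec n b)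
      have h4 : Msp n w ≤ Submodule.span (ZMod 2) {vvec n a + vvec n b} ⊔ Msp n (t*w) := h2
      have := Submodule.finrank_mono h4
      omega
    omega

lemma Msp_eq_sup_of_absLe {u w : Equiv.Perm (Fin n)} (h : absLe (ST n) u w) :
    Msp n w = Msp n u ⊔ Msp n (u⁻¹ * w) := by
  have hw : u * (u⁻¹ * w) = w := by group
  have hsub : Msp n w ≤ Msp n u ⊔ Msp n (u⁻¹ * w) := by
    conv_lhs => rw [← hw]
    exact Msp_mul_le n u (u⁻¹ * w)
  have hrank : finrank (ZMod 2)
      ((Msp n u ⊔ Msp n (u⁻¹ * w) : Submodule (ZMod 2) (Fin (n-1) → ZMod 2)) : Type _)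
        ≤ finrank (ZMod 2) (Msp n w) := by
    have h1 := finrank_sup_le' n (Msp n u) (Msp n (u⁻¹ * w))
    have h2 : lenT (ST n) w = lenT (ST n) u + lenT (ST n) (u⁻¹ * w) := h
    rw [lenT_eq_finrank, lenT_eq_finrank, lenT_eq_finrank] at h2
    omega
  exact Submodule.eq_of_le_of_finrank_le hsub hrank

lemma Msp_mono_of_absLe {u w : Equiv.Perm (Fin n)} (h : absLe (ST n) u w) :
    Msp n u ≤ Msp n w := by
  rw [Msp_eq_sup_of_absLe n h]
  exact le_sup_left

lemma FA_eq_Msp (w : Equiv.Perm (Fin n)) : FA n w = Msp n w := by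
  apply le_antisymm
  · apply sSup_le
    rintro L ⟨t, ⟨i, j, hij, rfl, rfl⟩, habs⟩
    exact (absLe_swap_iff n hij w).mp habs
  · apply Msp_le_iff
    intro p
    by_cases hp : w p = p
    · rw [hp, vv_self_add]
      exact Submodule.zero_mem _
    · have hne : p ≠ w p := fun he => hp he.symm
      have hLmem : Submodule.span (ZMod 2) {vvec n p + vvec n (w p)} ∈
          {L | ∃ t, lineOfA n t L ∧ absLe (ST n) t w} := by
        refine ⟨Equiv.swap p (w p), ⟨p, w p, hne, rfl, rfl⟩, ?_⟩
        rw [absLe_swap_iff n hne w, Submodule.span_singleton_le_iff_mem]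
        exact gen_mem_Msp n w p
      exact le_sSup hLmem (Submodule.mem_span_singleton_self _)

end ClaimF
section AlignedSec
open Equiv Submodule Module

variable (n : ℕ)

def Btw (a b c : Fin n) : Prop :=
  ((a:ℕ) < (b:ℕ) ∧ (b:ℕ) < (c:ℕ)) ∨ ((b:ℕ) < (c:ℕ) ∧ (c:ℕ) < (a:ℕ)) ∨
    ((c:ℕ) < (a:ℕ) ∧ (a:ℕ) < (b:ℕ))

lemma btw_irrefl_left (a c : Fin n) : ¬ Btw n a a c := by unfold Btw; omega

lemma btw_irrefl_right (a b : Fin n) : ¬ Btw n a b a := by unfold Btw; omega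

lemma btw_irrefl_mid (a b : Fin n) : ¬ Btw n a b b := by unfold Btw; omega

lemma fin_val_ne {a b : Fin n} (h : a ≠ b) : (a:ℕ) ≠ (b:ℕ) := fun he => h (Fin.ext he)

lemma btw_total {a b c : Fin n} (hab : a ≠ b) (hbc : b ≠ c) (hac : a ≠ c) :
    Btw n a b c ∨ Btw n a c b := by
  have h1 := fin_val_ne n hab
  have h2 := fin_val_ne n hbc
  have h3 := fin_val_ne n hac
  unfold Btw
  omega

lemma btw_asymm {a b c : Fin n} (h : Btw n a b c) : ¬ Btw n a c b := by
  unfold Btw at *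
  omega

lemma btw_rotate {a b c : Fin n} (h : Btw n a b c) : Btw n b c a := by
  unfold Btw at *
  omega

lemma btw_trans {p u v w : Fin n} (h1 : Btw n p u v) (h2 : Btw n p v w) : Btw n p u w := by
  unfold Btw at *
  omega

def Aligned (w : Equiv.Perm (Fin n)) : Prop :=
  ∀ p q, w.SameCycle p q → ¬ Btw n p q (w p)

noncomputable def Kper (w : Equiv.Perm (Fin n)) (p : Fin n) : ℕ :=
  Nat.find (⟨orderOf w, orderOf_pos w, by rw [pow_orderOf_eq_one]; rfl⟩ :
    ∃ k, 0 < k ∧ (w ^ k) p = p)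

lemma Kper_pos (w : Equiv.Perm (Fin n)) (p : Fin n) : 0 < Kper n w p :=
  (Nat.find_spec (⟨orderOf w, orderOf_pos w, by rw [pow_orderOf_eq_one]; rfl⟩ :
    ∃ k, 0 < k ∧ (w ^ k) p = p)).1

lemma Kper_spec (w : Equiv.Perm (Fin n)) (p : Fin n) : (w ^ (Kper n w p)) p = p :=
  (Nat.find_spec (⟨orderOf w, orderOf_pos w, by rw [pow_orderOf_eq_one]; rfl⟩ :
    ∃ k, 0 < k ∧ (w ^ k) p = p)).2

lemma Kper_min (w : Equiv.Perm (Fin n)) (p : Fin n) {k : ℕ} (h0 : 0 < k)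
    (hk : k < Kper n w p) : (w ^ k) p ≠ p := by
  intro he
  exact Nat.find_min _ hk ⟨h0, he⟩

lemma pow_inj_on_Kper (w : Equiv.Perm (Fin n)) (p : Fin n) {i j : ℕ}
    (hij : i < j) (hj : j < Kper n w p) : (w ^ i) p ≠ (w ^ j) p := by
  intro he
  have h1 : (w ^ i) ((w ^ (j - i)) p) = (w ^ i) p := by
    rw [← Equiv.Perm.mul_apply, ← pow_add]
    rw [show i + (j - i) = j by omega]
    exact he.symm
  have h2 : (w ^ (j - i)) p = p := (w ^ i).injective h1
  exact Kper_min n w p (by omega) (by omega) h2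

lemma pow_mul_Kper (w : Equiv.Perm (Fin n)) (p : Fin n) (m : ℕ) :
    (w ^ (m * Kper n w p)) p = p := by
  induction m with
  | zero => simp
  | succ m ih =>
    rw [show (m + 1) * Kper n w p = m * Kper n w p + Kper n w p by ring, pow_add,
      Equiv.Perm.mul_apply, Kper_spec, ih]

lemma pow_mod_Kper (w : Equiv.Perm (Fin n)) (p : Fin n) (i : ℕ) :
    (w ^ i) p = (w ^ (i % Kper n w p)) p := by
  conv_lhs => rw [show i = i % Kper n w p + (i / Kper n w p) * Kper n w p by
    rw [Nat.mod_add_div']]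
  rw [pow_add, Equiv.Perm.mul_apply, pow_mul_Kper]

lemma sameCycle_iff_exists_pow_lt (w : Equiv.Perm (Fin n)) (p q : Fin n) :
    w.SameCycle p q ↔ ∃ s, s < Kper n w p ∧ (w ^ s) p = q := by
  constructor
  · intro h
    obtain ⟨i, _, _, hpow⟩ := Equiv.Perm.SameCycle.exists_pow_eq w h
    refine ⟨i % Kper n w p, Nat.mod_lt _ (Kper_pos n w p), ?_⟩
    rw [← pow_mod_Kper]
    exact hpow
  · rintro ⟨s, _, rfl⟩
    exact ⟨(s : ℤ), by rw [zpow_natCast]⟩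

lemma walk_btw {w : Equiv.Perm (Fin n)} (hal : Aligned n w) (p : Fin n) :
    ∀ j, j < Kper n w p → ∀ i, 0 < i → i < j → Btw n p ((w ^ i) p) ((w ^ j) p) := by
  have hstep : ∀ j, 0 < j → j + 1 < Kper n w p →
      Btw n p ((w ^ j) p) ((w ^ (j+1)) p) := by
    intro j hj0 hj1
    have hd1 : p ≠ (w ^ j) p := by
      have := pow_inj_on_Kper n w p (show 0 < j by omega) (by omega)
      simpa using this
    have hd2 : (w ^ j) p ≠ (w ^ (j+1)) p :=
      pow_inj_on_Kper n w p (by omega) hj1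
    have hd3 : p ≠ (w ^ (j+1)) p := by
      have := pow_inj_on_Kper n w p (show 0 < j + 1 by omega) hj1
      simpa using this
    rcases btw_total n hd1 hd2 hd3 with h | h
    · exact h
    · exfalso
      have hrot : Btw n ((w ^ j) p) p ((w ^ (j+1)) p) :=
        btw_rotate n (btw_rotate n h)
      have happ : (w ^ (j+1)) p = w ((w ^ j) p) := by
        rw [pow_succ']
        rfl
      have hsc0 : w.SameCycle p ((w ^ j) p) := ⟨(j : ℤ), by rw [zpow_natCast]⟩
      exact hal ((w ^ j) p) p hsc0.symm (happ ▸ hrot)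
  intro j
  induction j with
  | zero => omega
  | succ j ih =>
    intro hj1 i hi0 hij
    by_cases hijeq : i = j
    · subst hijeq
      exact hstep i hi0 hj1
    · have hj0 : 0 < j := by omega
      have hij' : i < j := by omega
      have h1 := ih (by omega) i hi0 hij'
      have h2 := hstep j hj0 hj1
      exact btw_trans n h1 h2

lemma sameCycle_mul_swap_le {x : Equiv.Perm (Fin n)} {a b : Fin n}
    (hsc : x.SameCycle a b) :
    ∀ p q, (x * Equiv.swap a b).SameCycle p q → x.SameCycle p q := by
  set y := x * Equiv.swap a b with hy
  have hbase : ∀ p, x.SameCycle p (y p) := by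
    intro p
    have happ : y p = x (Equiv.swap a b p) := rfl
    by_cases hpa : p = a
    · rw [happ, hpa, Equiv.swap_apply_left]
      exact Equiv.Perm.sameCycle_apply_right.mpr hsc
    · by_cases hpb : p = b
      · rw [happ, hpb, Equiv.swap_apply_right]
        exact Equiv.Perm.sameCycle_apply_right.mpr hsc.symm
      · rw [happ, Equiv.swap_apply_of_ne_of_ne hpa hpb]
        exact Equiv.Perm.sameCycle_apply_right.mpr (Equiv.Perm.SameCycle.refl x p)
  have hpow : ∀ k p, x.SameCycle p ((y ^ k) p) := by
    intro k
    induction k with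
    | zero => intro p; simpa using Equiv.Perm.SameCycle.refl x p
    | succ k ih =>
      intro p
      have : (y ^ (k+1)) p = (y ^ k) (y p) := by
        rw [pow_succ]
        rfl
      rw [this]
      exact (hbase p).trans (ih (y p))
  intro p q hpq
  obtain ⟨s, _, rfl⟩ := (sameCycle_iff_exists_pow_lt n y p q).mp hpq
  exact hpow s p

lemma orbit_descr_mul_swap {x : Equiv.Perm (Fin n)} {a b : Fin n} (hab : a ≠ b)
    {m : ℕ} (hm0 : 0 < m) (hmK : m < Kper n x a) (hmb : (x ^ m) a = b) :
    ∀ k : ℕ, ((x * Equiv.swap a b) ^ k) a = a ∨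
      ∃ s, m < s ∧ s < Kper n x a ∧ ((x * Equiv.swap a b) ^ k) a = (x ^ s) a := by
  set y := x * Equiv.swap a b with hy
  set K := Kper n x a with hK
  have hya : y a = (x ^ (m+1)) a := by
    have : y a = x b := by
      rw [hy]
      show x (Equiv.swap a b a) = x b
      rw [Equiv.swap_apply_left]
    rw [this, ← hmb, pow_succ']
    rfl
  intro k
  induction k with
  | zero => exact Or.inl (by simp)
  | succ k ih =>
    have hstep : (y ^ (k+1)) a = y ((y ^ k) a) := by
      rw [pow_succ']
      rfl
    rcases ih with h | ⟨s, hms, hsK, h⟩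
    · rw [hstep, h, hya]
      by_cases hmK1 : m + 1 = K
      · rw [hmK1, hK]
        exact Or.inl (Kper_spec n x a)
      · exact Or.inr ⟨m+1, by omega, by omega, rfl⟩
    · rw [hstep, h]
      have hne_a : (x ^ s) a ≠ a := by
        have := pow_inj_on_Kper n x a (show 0 < s by omega) hsK
        simpa using this.symm
      have hne_b : (x ^ s) a ≠ b := by
        rw [← hmb]
        have := pow_inj_on_Kper n x a hms hsK
        exact this.symm
      have hys : y ((x ^ s) a) = (x ^ (s+1)) a := by
        have : y ((x ^ s) a) = x (Equiv.swap a b ((x ^ s) a)) := rfl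
        rw [this, Equiv.swap_apply_of_ne_of_ne hne_a hne_b, ← Equiv.Perm.mul_apply,
          ← pow_succ']
      rw [hys]
      by_cases hsK1 : s + 1 = K
      · rw [hsK1, hK]
        exact Or.inl (Kper_spec n x a)
      · exact Or.inr ⟨s+1, by omega, by omega, rfl⟩

lemma aligned_case_a {x : Equiv.Perm (Fin n)} {a b : Fin n} (hal : Aligned n x)
    (hab : a ≠ b) (hsc : x.SameCycle a b) (q : Fin n)
    (hq : (x * Equiv.swap a b).SameCycle a q) :
    ¬ Btw n a q ((x * Equiv.swap a b) a) := by
  set y := x * Equiv.swap a b with hy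
  set K := Kper n x a with hK
  obtain ⟨m, hmK, hmb⟩ := (sameCycle_iff_exists_pow_lt n x a b).mp hsc
  have hm0 : 0 < m := by
    rcases Nat.eq_zero_or_pos m with h | h
    · exfalso; apply hab; rw [← hmb, h]; simp
    · exact h
  have hya : y a = (x ^ (m+1)) a := by
    have : y a = x b := by
      rw [hy]
      show x (Equiv.swap a b a) = x b
      rw [Equiv.swap_apply_left]
    rw [this, ← hmb, pow_succ']
    rfl
  obtain ⟨k, _, rfl⟩ := (sameCycle_iff_exists_pow_lt n y a q).mp hq
  rcases orbit_descr_mul_swap n hab hm0 hmK hmb k with h | ⟨s, hms, hsK, h⟩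
  · rw [h]
    exact btw_irrefl_left n a (y a)
  · rw [h, hya]
    by_cases hmK1 : m + 1 = K
    · have : (x ^ (m+1)) a = a := by rw [hmK1, hK]; exact Kper_spec n x a
      rw [this]
      exact btw_irrefl_right n a ((x ^ s) a)
    · by_cases hsm1 : s = m + 1
      · rw [hsm1]
        exact btw_irrefl_mid n a ((x ^ (m+1)) a)
      · have hwalk := walk_btw n hal a s hsK (m+1) (by omega) (by omega)
        exact btw_asymm n hwalk
end AlignedSec
section AlignedMain
open Equiv Submodule Module

variable (n : ℕ)

lemma aligned_mul_swap {x : Equiv.Perm (Fin n)} {a b : Fin n} (hal : Aligned n x)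
    (hab : a ≠ b) (hsc : x.SameCycle a b) : Aligned n (x * Equiv.swap a b) := by
  intro p q hpq
  by_cases hpa : p = a
  · subst hpa
    exact aligned_case_a n hal hab hsc q hpq
  · by_cases hpb : p = b
    · subst hpb
      rw [Equiv.swap_comm] at hpq ⊢
      exact aligned_case_a n hal hab.symm hsc.symm q hpq
    · have happ : (x * Equiv.swap a b) p = x p := by
        show x (Equiv.swap a b p) = x p
        rw [Equiv.swap_apply_of_ne_of_ne hpa hpb]
      rw [happ]
      exact hal p q (sameCycle_mul_swap_le n hsc p q hpq)

lemma pow_fixed {w : Equiv.Perm (Fin n)} {p : Fin n} (h : w p = p) :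
    ∀ k : ℕ, (w ^ k) p = p := by
  intro k
  induction k with
  | zero => simp
  | succ k ih =>
    rw [pow_succ']
    show w ((w ^ k) p) = p
    rw [ih, h]

lemma sameCycle_of_fixed {w : Equiv.Perm (Fin n)} {p q : Fin n} (h : w p = p)
    (hsc : w.SameCycle p q) : q = p := by
  obtain ⟨s, _, rfl⟩ := (sameCycle_iff_exists_pow_lt n w p q).mp hsc
  exact pow_fixed n h s

lemma aligned_unique {u w : Equiv.Perm (Fin n)} (hu : Aligned n u) (hw : Aligned n w)
    (horb : ∀ p q, u.SameCycle p q ↔ w.SameCycle p q) : u = w := by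
  apply Equiv.ext
  intro p
  by_contra hne
  have hup : u p ≠ p := by
    intro h
    have h2 : u.SameCycle p (w p) := (horb p (w p)).mpr ⟨1, by simp⟩
    have := sameCycle_of_fixed n h h2
    exact hne (by rw [h, this])
  have hwp : w p ≠ p := by
    intro h
    have h2 : w.SameCycle p (u p) := (horb p (u p)).mp ⟨1, by simp⟩
    have := sameCycle_of_fixed n h h2
    exact hne (by rw [h, this])
  have hscu : u.SameCycle p (u p) := ⟨1, by simp⟩
  have hscw : w.SameCycle p (w p) := ⟨1, by simp⟩
  have hd1 : p ≠ u p := fun h => hup h.symm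
  have hd2 : u p ≠ w p := hne
  have hd3 : p ≠ w p := fun h => hwp h.symm
  rcases btw_total n hd1 hd2 hd3 with h | h
  · exact hw p (u p) ((horb p (u p)).mp hscu) h
  · exact hu p (w p) ((horb p (w p)).mpr hscw) h

lemma aligned_finRotate (hn : 2 ≤ n) : Aligned n (finRotate n) := by
  intro p q _
  rcases n with _ | m
  · omega
  · have happ : finRotate (m + 1) p = p + 1 := finRotate_succ_apply p
    rw [happ]
    have hval : ((p + 1 : Fin (m+1)) : ℕ) = if p = Fin.last m then 0 else (p : ℕ) + 1 :=
      Fin.val_add_one p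
    have hq := q.isLt
    have hp := p.isLt
    unfold Btw
    by_cases hpl : p = Fin.last m
    · rw [if_pos hpl] at hval
      have : (p : ℕ) = m := by rw [hpl]; rfl
      omega
    · rw [if_neg hpl] at hval
      omega

lemma lenT_eq_zero_iff (w : Equiv.Perm (Fin n)) : lenT (ST n) w = 0 ↔ w = 1 := by
  constructor
  · intro h
    rw [lenT_eq_finrank] at h
    have hbot : Msp n w = ⊥ := Submodule.finrank_eq_zero.mp h
    by_contra hw
    obtain ⟨i, hne, hi⟩ := exists_nonfixed_small n hw
    have hmem := gen_mem_Msp n w i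
    rw [hbot, Submodule.mem_bot] at hmem
    exact vpair_ne_zero n (fun he => hne he.symm) hmem
  · intro h
    rw [h]
    exact lenT_one (ST n)

lemma lenT_triangle (u v : Equiv.Perm (Fin n)) :
    lenT (ST n) (u * v) ≤ lenT (ST n) u + lenT (ST n) v := by
  obtain ⟨lu, hlu, hlulen, hluprod⟩ := exists_swap_list n u
  obtain ⟨lv, hlv, hlvlen, hlvprod⟩ := exists_swap_list n v
  have hu : lenT (ST n) u ∈ lenSet (ST n) u := ⟨lu, hlu, by rw [hlulen, lenT_eq_finrank], hluprod⟩
  have hv : lenT (ST n) v ∈ lenSet (ST n) v := ⟨lv, hlv, by rw [hlvlen, lenT_eq_finrank], hlvprod⟩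
  exact lenT_le (lenSet_mul hu hv)

lemma lenT_global (w c : Equiv.Perm (Fin n)) :
    lenT (ST n) c ≤ lenT (ST n) w + lenT (ST n) (w⁻¹ * c) := by
  have := lenT_triangle n w (w⁻¹ * c)
  rwa [mul_inv_cancel_left] at this

lemma Msp_mul_swap_le (w : Equiv.Perm (Fin n)) (a b : Fin n) :
    Msp n (w * Equiv.swap a b) ≤
      Submodule.span (ZMod 2) {vvec n a + vvec n b} ⊔ Msp n w := by
  rw [← Msp_inv n (w * Equiv.swap a b), mul_inv_rev, Equiv.swap_inv]
  have := Msp_swap_mul_le n a b w⁻¹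
  rwa [Msp_inv] at this

lemma aligned_of_NC (hn : 2 ≤ n) {w : Equiv.Perm (Fin n)}
    (hw : absLe (ST n) w (finRotate n)) : Aligned n w := by
  set c := finRotate n with hc
  generalize hr : lenT (ST n) (w⁻¹ * c) = r
  induction r using Nat.strong_induction_on generalizing w with
  | _ r ih =>
  rcases Nat.eq_zero_or_pos r with hr0 | hrpos
  · have : w⁻¹ * c = 1 := by
      rw [← lenT_eq_zero_iff n]
      rw [hr, hr0]
    have hwc : w = c := by
      have h2 := congrArg (w * ·) this
      simpa [mul_inv_cancel_left] using h2.symm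
    rw [hwc, hc]
    exact aligned_finRotate n hn
  · set u := w⁻¹ * c with hu
    have hune : u ≠ 1 := by
      intro h
      have : r = 0 := by rw [← hr, h, lenT_one]
      omega
    have hnonempty : (lenSet (ST n) u).Nonempty := by
      obtain ⟨l, hl, hlen, hprod⟩ := exists_swap_list n u
      exact ⟨l.length, l, hl, rfl, hprod⟩
    have hmem := Nat.sInf_mem hnonempty
    obtain ⟨l, hls, hllen, hlprod⟩ := hmem
    have hlr : l.length = r := by rw [hllen]; exact hr
    have hlne : l ≠ [] := by
      intro h
      rw [h] at hlr
      simp at hlr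
      omega
    obtain ⟨t, l', rfl⟩ := List.exists_cons_of_ne_nil hlne
    obtain ⟨a, b, hab, rfl⟩ := hls _ List.mem_cons_self
    set t := Equiv.swap a b with ht
    set w' := w * t with hw'
    have hstep : w'⁻¹ * c = l'.prod := by
      rw [hw', mul_inv_rev, ht, Equiv.swap_inv, mul_assoc, ← hu, ← hlprod,
        List.prod_cons, ← ht, ← mul_assoc, Equiv.swap_mul_self, one_mul]
    have hlen_step : lenT (ST n) (w'⁻¹ * c) ≤ r - 1 := by
      rw [hstep]
      apply lenT_le
      refine ⟨l', fun s hs => hls s (List.mem_cons_of_mem _ hs), ?_, rfl⟩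
      simp at hlr
      omega
    have hlenw' : lenT (ST n) w' ≤ lenT (ST n) w + 1 := by
      have h0 := lenT_triangle n w t
      have h1 : lenT (ST n) t = 1 := by rw [ht]; exact lenT_swap n hab
      rw [← hw'] at h0
      omega
    have habs : lenT (ST n) c = lenT (ST n) w + r := by
      rw [← hr]
      exact hw
    have hglob := lenT_global n w' c
    have heq1 : lenT (ST n) w' = lenT (ST n) w + 1 := by omega
    have heq2 : lenT (ST n) (w'⁻¹ * c) = r - 1 := by omega
    have habs' : absLe (ST n) w' c := by
      show lenT (ST n) c = lenT (ST n) w' + lenT (ST n) (w'⁻¹ * c)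
      omega
    have hal' : Aligned n w' := ih (r - 1) (by omega) habs' heq2
    -- now show SameCycle w' a b and conclude
    have hsub : Msp n w ≤ Submodule.span (ZMod 2) {vvec n a + vvec n b} ⊔ Msp n w' := by
      have : w = w' * t := by
        rw [hw', ht, mul_assoc, Equiv.swap_mul_self, mul_one]
      rw [this, ht]
      exact Msp_mul_swap_le n w' a b
    have hsub2 : Msp n w' ≤ Submodule.span (ZMod 2) {vvec n a + vvec n b} ⊔ Msp n w := by
      rw [hw', ht]
      exact Msp_mul_swap_le n w a b
    have hrank : finrank (ZMod 2)
        ((Submodule.span (ZMod 2) {vvec n a + vvec n b} ⊔ Msp n w :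
          Submodule (ZMod 2) (Fin (n-1) → ZMod 2)) : Type _) ≤ finrank (ZMod 2) (Msp n w') := by
      have h1 := finrank_sup_line_le n (Msp n w) (vvec n a + vvec n b)
      have h2 : lenT (ST n) w' = finrank (ZMod 2) (Msp n w') := lenT_eq_finrank n w'
      have h3 : lenT (ST n) w = finrank (ZMod 2) (Msp n w) := lenT_eq_finrank n w
      omega
    have heqM : Msp n w' = Submodule.span (ZMod 2) {vvec n a + vvec n b} ⊔ Msp n w :=
      Submodule.eq_of_le_of_finrank_le hsub2 hrank
    have hvmem : vvec n a + vvec n b ∈ Msp n w' := by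
      rw [heqM]
      exact Submodule.mem_sup_left (Submodule.mem_span_singleton_self _)
    have hsc : w'.SameCycle a b := by
      rcases (mem_Msp_iff_sameCycle n).mp hvmem with h | h
      · exact absurd h hab
      · exact h
    have : w = w' * Equiv.swap a b := by
      rw [hw', ht, mul_assoc, Equiv.swap_mul_self, mul_one]
    rw [this]
    exact aligned_mul_swap n hal' hab hsc

lemma NC_ext (hn : 2 ≤ n) {u w : Equiv.Perm (Fin n)}
    (hu : absLe (ST n) u (finRotate n)) (hw : absLe (ST n) w (finRotate n))
    (hM : Msp n u = Msp n w) : u = w := by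
  apply aligned_unique n (aligned_of_NC n hn hu) (aligned_of_NC n hn hw)
  intro p q
  by_cases hpq : p = q
  · subst hpq
    exact ⟨fun _ => Equiv.Perm.SameCycle.refl w p, fun _ => Equiv.Perm.SameCycle.refl u p⟩
  · constructor
    · intro h
      have := (mem_Msp_iff_sameCycle n (w := u)).mpr (Or.inr h)
      rw [hM] at this
      rcases (mem_Msp_iff_sameCycle n).mp this with h2 | h2
      · exact absurd h2 hpq
      · exact h2
    · intro h
      have := (mem_Msp_iff_sameCycle n (w := w)).mpr (Or.inr h)
      rw [← hM] at this
      rcases (mem_Msp_iff_sameCycle n).mp this with h2 | h2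
      · exact absurd h2 hpq
      · exact h2

end AlignedMain
section ChainSec
open Equiv Submodule Module

variable {n : ℕ}

lemma chain_absLe {w : Fin (n-1+1) → Equiv.Perm (Fin n)}
    (hch : IsNCMaxChain (ST n) (finRotate n) w) :
    ∀ i j : Fin (n-1+1), i ≤ j → absLe (ST n) (w i) (w j) := by
  obtain ⟨h0, hlast, hNC, hlen, hlt⟩ := hch
  have key : ∀ j i : Fin (n-1+1), i ≤ j → lenT (ST n) ((w i)⁻¹ * w j) ≤ j.val - i.val := by
    intro j
    induction j using Fin.induction with
    | zero =>
      intro i hi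
      have hi0 : i = 0 := le_antisymm hi (Fin.zero_le i)
      subst hi0
      rw [inv_mul_cancel, lenT_one]
      omega
    | succ j ihj =>
      intro i hi
      by_cases heq : i = j.succ
      · subst heq
        rw [inv_mul_cancel, lenT_one]
        omega
      · have hival : (i : ℕ) ≤ (j : ℕ) := by
          have h1 : (i : ℕ) ≤ (j.succ : ℕ) := hi
          rw [Fin.val_succ] at h1
          have h2 : (i : ℕ) ≠ (j.succ : ℕ) := fun he => heq (Fin.ext he)
          rw [Fin.val_succ] at h2
          omega
        have hi' : i ≤ j.castSucc := by
          rw [Fin.le_def, Fin.coe_castSucc]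
          exact hival
        have h1 := ihj i hi'
        have h2 : lenT (ST n) ((w j.castSucc)⁻¹ * w j.succ) = 1 := by
          have habs := (hlt j).1
          have e1 := hlen j.castSucc
          have e2 := hlen j.succ
          rw [Fin.coe_castSucc] at e1
          rw [Fin.val_succ] at e2
          have : lenT (ST n) (w j.succ) =
              lenT (ST n) (w j.castSucc) + lenT (ST n) ((w j.castSucc)⁻¹ * w j.succ) := habs
          omega
        have h3 : (w i)⁻¹ * w j.succ =
            ((w i)⁻¹ * w j.castSucc) * ((w j.castSucc)⁻¹ * w j.succ) := by group
        have h4 := lenT_triangle n ((w i)⁻¹ * w j.castSucc) ((w j.castSucc)⁻¹ * w j.succ)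
        rw [← h3] at h4
        rw [Fin.coe_castSucc] at h1
        rw [Fin.val_succ]
        omega
  intro i j hij
  show lenT (ST n) (w j) = lenT (ST n) (w i) + lenT (ST n) ((w i)⁻¹ * w j)
  have h1 := key j i hij
  have h2 := lenT_global n (w i) (w j)
  rw [hlen i, hlen j] at *
  have h3 : (i : ℕ) ≤ (j : ℕ) := hij
  omega

lemma flag_complete (hn : 2 ≤ n) {w : Fin (n-1+1) → Equiv.Perm (Fin n)}
    (hch : IsNCMaxChain (ST n) (finRotate n) w) : IsCompleteFlag n (flagOfChain n w) := by
  constructor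
  · intro i
    show finrank (ZMod 2) (FA n (w i.succ)) = (i : ℕ) + 1
    rw [FA_eq_Msp, ← lenT_eq_finrank, hch.2.2.2.1 i.succ, Fin.val_succ]
  · intro i j hij
    show FA n (w i.succ) ≤ FA n (w j.succ)
    rw [FA_eq_Msp, FA_eq_Msp]
    apply Msp_mono_of_absLe
    apply chain_absLe ⟨hch.1, hch.2.1, hch.2.2.1, hch.2.2.2.1, hch.2.2.2.2⟩
    rw [Fin.le_def, Fin.val_succ, Fin.val_succ]
    have : (i : ℕ) ≤ (j : ℕ) := hij
    omega

lemma FA_inj (hn : 2 ≤ n) {u u' : Equiv.Perm (Fin n)}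
    (hu : u ∈ NC (ST n) (finRotate n)) (hu' : u' ∈ NC (ST n) (finRotate n))
    (hFA : FA n u = FA n u') : u = u' := by
  apply NC_ext n hn hu hu'
  rw [← FA_eq_Msp, ← FA_eq_Msp, hFA]

lemma entry_ne_iff (hn : 2 ≤ n) {w w' : Fin (n-1+1) → Equiv.Perm (Fin n)}
    (hch : IsNCMaxChain (ST n) (finRotate n) w)
    (hch' : IsNCMaxChain (ST n) (finRotate n) w') (j : Fin (n-1)) :
    w j.succ ≠ w' j.succ ↔ flagOfChain n w j ≠ flagOfChain n w' j := by
  constructor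
  · intro h hFA
    exact h (FA_inj hn (hch.2.2.1 j.succ) (hch'.2.2.1 j.succ) hFA)
  · intro h he
    exact h (by show FA n (w j.succ) = FA n (w' j.succ); rw [he])

end ChainSec
/-- the map from maximal chains of `NC(S_n)` to complete flags of
`𝔽₂^{n-1}` is well defined and injective, sends chains differing in exactly one entry to
flags differing in exactly one subspace, and hence induces an embedding of the Hurwitz
graph `H(S_n)` into the flag graph of `𝔽₂^{n-1}`. -/
theorem hurwitz_embeds_into_flag_graph (n : ℕ) (hn : 2 ≤ n) :
    (∀ w : Fin (n-1+1) → Equiv.Perm (Fin n), IsNCMaxChain (ST n) (finRotate n) w →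
       IsCompleteFlag n (flagOfChain n w)) ∧
    (∀ w w' : Fin (n-1+1) → Equiv.Perm (Fin n), IsNCMaxChain (ST n) (finRotate n) w →
       IsNCMaxChain (ST n) (finRotate n) w' →
       flagOfChain n w = flagOfChain n w' → w = w') ∧
    (∀ w w' : Fin (n-1+1) → Equiv.Perm (Fin n), IsNCMaxChain (ST n) (finRotate n) w →
       IsNCMaxChain (ST n) (finRotate n) w' → (∃! i, w i ≠ w' i) →
       (∃! i, flagOfChain n w i ≠ flagOfChain n w' i)) ∧
    Nonempty ((hurwitzGraph (ST n) (finRotate n) (n-1)) ↪g (flagGraph n)) := by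
  have part1 : ∀ w : Fin (n-1+1) → Equiv.Perm (Fin n),
      IsNCMaxChain (ST n) (finRotate n) w → IsCompleteFlag n (flagOfChain n w) :=
    fun w hch => flag_complete hn hch
  have part2 : ∀ w w' : Fin (n-1+1) → Equiv.Perm (Fin n),
      IsNCMaxChain (ST n) (finRotate n) w → IsNCMaxChain (ST n) (finRotate n) w' →
      flagOfChain n w = flagOfChain n w' → w = w' := by
    intro w w' hch hch' hfl
    funext i
    rcases Fin.eq_zero_or_eq_succ i with rfl | ⟨j, rfl⟩
    · rw [hch.1, hch'.1]
    · exact FA_inj hn (hch.2.2.1 j.succ) (hch'.2.2.1 j.succ) (congrFun hfl j)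
  have part3 : ∀ w w' : Fin (n-1+1) → Equiv.Perm (Fin n),
      IsNCMaxChain (ST n) (finRotate n) w → IsNCMaxChain (ST n) (finRotate n) w' →
      (∃! i, w i ≠ w' i) → (∃! i, flagOfChain n w i ≠ flagOfChain n w' i) := by
    intro w w' hch hch' ⟨i₀, hne, huniq⟩
    rcases Fin.eq_zero_or_eq_succ i₀ with rfl | ⟨j₀, rfl⟩
    · exact absurd (by rw [hch.1, hch'.1]) hne
    · refine ⟨j₀, (entry_ne_iff hn hch hch' j₀).mp hne, ?_⟩
      intro j hj
      have h1 : w j.succ ≠ w' j.succ := (entry_ne_iff hn hch hch' j).mpr hj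
      have h2 := huniq j.succ h1
      exact Fin.succ_injective _ h2
  have part3' : ∀ w w' : Fin (n-1+1) → Equiv.Perm (Fin n),
      IsNCMaxChain (ST n) (finRotate n) w → IsNCMaxChain (ST n) (finRotate n) w' →
      (∃! i, flagOfChain n w i ≠ flagOfChain n w' i) → (∃! i, w i ≠ w' i) := by
    intro w w' hch hch' ⟨j₀, hne, huniq⟩
    refine ⟨j₀.succ, (entry_ne_iff hn hch hch' j₀).mpr hne, ?_⟩
    intro i hi
    rcases Fin.eq_zero_or_eq_succ i with rfl | ⟨j, rfl⟩
    · exact absurd (by rw [hch.1, hch'.1]) hi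
    · have h1 := (entry_ne_iff hn hch hch' j).mp hi
      rw [huniq j h1]
  refine ⟨part1, part2, part3, ⟨⟨⟨fun a => ⟨flagOfChain n a.1, part1 a.1 a.2⟩, ?_⟩, ?_⟩⟩⟩
  · intro a b h
    exact Subtype.ext (part2 a.1 b.1 a.2 b.2 (congrArg Subtype.val h))
  · intro a b
    show (∃! i, flagOfChain n a.1 i ≠ flagOfChain n b.1 i) ↔ (∃! i, a.1 i ≠ b.1 i)
    exact ⟨part3' a.1 b.1 a.2 b.2, part3 a.1 b.1 a.2 b.2⟩

end NCPaper
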